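/- There exists a 2-iterated pushdown automaton with input alphabet {r, s, b, w} that accepts a word u if and only if u = r · s^k · φ(σ^k(B)) · s^k for some integer k ≥ 1; these are exactly the contour words of the truncated black sectors of the pentagrid and of the heptagrid (root read as r, the nodes of the leftmost and rightmost branches below the root read as s, and the bottom level read as the level word of the Fibonacci tree rooted at a black node). -/

import Mathlib

/-- Operations on a 2-level iterated pushdown store. -/
inductive Op (Γ : Type*) where
  | pop1 : Op Γ
  | pop2 : Op Γ
  | push1 : List Γ → Op Γ
  | push2 : List Γ → Op Γ

/-- A 2-level pushdown store: a finite list of entries `(A, s)` with `A` a letter of `Γ`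
and `s ∈ Γ*` the inner store of the entry. -/
abbrev Store (Γ : Type*) := List (Γ × List Γ)

/-- The top symbols of a 2-level store: the letter of the top entry followed by the first
letter of its inner store when that inner store is nonempty; an element of `Γ ∪ Γ²`. -/
def topsym {Γ : Type*} : Store Γ → List Γ
  | [] => []
  | (A, s) :: _ => A :: s.take 1

/-- Apply an operation to a 2-level store (a partial operation):
`pop1` removes the top entry; `pop2` removes the first letter of the inner store of the
top entry (when nonempty); `push1 w` replaces the top entry `(A, s)` by the entries
`(w_1, s), …, (w_m, s)`; `push2 u` replaces the top entry `(A, s)` by `(A, u ++ s)`. -/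
def applyOp {Γ : Type*} : Op Γ → Store Γ → Option (Store Γ)
  | .pop1, _ :: rest => some rest
  | .pop2, (A, _ :: s) :: rest => some ((A, s) :: rest)
  | .push1 w, (_, s) :: rest => some (w.map (fun x => (x, s)) ++ rest)
  | .push2 u, (A, s) :: rest => some ((A, u ++ s) :: rest)
  | _, _ => none

/-- A 2-iterated pushdown automaton with state set `Q`, input alphabet `In` and store
alphabet `Γ`: an initial state `q0`, an initial store symbol `Z`, and a transition table
`δ` assigning to each triple `(q, a, t)` — with `a ∈ In ∪ {ε}` and `t ∈ Γ ∪ Γ²` — a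
finite set (list) of instructions `(q', op)`. -/
structure IPDA2 (Q In Γ : Type*) where
  q0 : Q
  Z : Γ
  δ : Q → Option In → List Γ → List (Q × Op Γ)

/-- A configuration: current state, remaining input word, current 2-level store. -/
abbrev Config (Q In Γ : Type*) := Q × List In × Store Γ

/-- One computation step: an instruction from `δ(q, a, topsym ω)` may be applied, where
`a = ε` (no input consumed) or `a` is the first letter of the remaining input (which is
then consumed); the state changes to `q'` and the operation is applied to the store. -/
inductive IPDA2.Step {Q In Γ : Type*} (M : IPDA2 Q In Γ) :
    Config Q In Γ → Config Q In Γ → Prop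
  | eps {q q' : Q} {w : List In} {ω ω' : Store Γ} {op : Op Γ} :
      (q', op) ∈ M.δ q none (topsym ω) → applyOp op ω = some ω' →
      M.Step (q, w, ω) (q', w, ω')
  | read {q q' : Q} {a : In} {w : List In} {ω ω' : Store Γ} {op : Op Γ} :
      (q', op) ∈ M.δ q (some a) (topsym ω) → applyOp op ω = some ω' →
      M.Step (q, a :: w, ω) (q', w, ω')

/-- A finite sequence of computation steps. -/
def IPDA2.Steps {Q In Γ : Type*} (M : IPDA2 Q In Γ) :
    Config Q In Γ → Config Q In Γ → Prop :=
  Relation.ReflTransGen M.Step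

/-- Acceptance: some finite sequence of steps leads from the initial configuration
`(q0, w, [(Z, ε)])` to a configuration with empty remaining input and empty store. -/
def IPDA2.Accepts {Q In Γ : Type*} (M : IPDA2 Q In Γ) (w : List In) : Prop :=
  ∃ q : Q, M.Steps (M.q0, w, [(M.Z, [])]) (q, [], [])

/-- The two-letter alphabet `{B, W}` of node labels. -/
inductive BW where
  | B : BW
  | W : BW
  deriving DecidableEq

/-- The substitution `σ` determined by `σ(B) = BW` and `σ(W) = BWW`, on letters. -/
def sigmaLetter : BW → List BW
  | .B => [.B, .W]
  | .W => [.B, .W, .W]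

/-- The substitution `σ` extended to words (monoid morphism of words). -/
def sigmaWord (w : List BW) : List BW := w.flatMap sigmaLetter

/-- The two-letter input alphabet `{b, w}`. -/
inductive bw where
  | b : bw
  | w : bw
  deriving DecidableEq

/-- The letter renaming `φ : B ↦ b, W ↦ w`. -/
def phi : BW → bw
  | .B => .b
  | .W => .w

/-- The four-letter input alphabet `{r, s, b, w}`. -/
inductive rsbw where
  | r : rsbw
  | s : rsbw
  | b : rsbw
  | w : rsbw
  deriving DecidableEq

/-- The letter renaming `φ : B ↦ b, W ↦ w` into the alphabet `{r, s, b, w}`. -/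
def phi' : BW → rsbw
  | .B => .b
  | .W => .w


namespace BlackSector

/-- States of our automaton. -/
inductive St where
  | q0 | q1 | q2 | q3
  deriving DecidableEq

instance : Fintype St where
  elems := {.q0, .q1, .q2, .q3}
  complete := by intro x; cases x <;> simp

/-- Store alphabet: `Z` initial, `B`,`W` tree letters, `C` the unary counter symbol. -/
inductive Gam where
  | Z | B | W | C
  deriving DecidableEq

instance : Fintype Gam where
  elems := {.Z, .B, .W, .C}
  complete := by intro x; cases x <;> simp

/-- The transition table. -/
def delta : St → Option rsbw → List Gam → List (St × Op Gam)
  | .q0, some .r, [.Z] => [(.q1, .push2 [])]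
  | .q1, some .s, [.Z] => [(.q1, .push2 [.C])]
  | .q1, some .s, [.Z, .C] => [(.q1, .push2 [.C])]
  | .q1, none, [.Z, .C] => [(.q2, .push1 [.B, .Z])]
  | .q2, none, [.B, .C] => [(.q3, .pop2)]
  | .q2, none, [.W, .C] => [(.q3, .pop2)]
  | .q3, none, [.B] => [(.q2, .push1 [.B, .W])]
  | .q3, none, [.B, .C] => [(.q2, .push1 [.B, .W])]
  | .q3, none, [.W] => [(.q2, .push1 [.B, .W, .W])]
  | .q3, none, [.W, .C] => [(.q2, .push1 [.B, .W, .W])]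
  | .q2, some .b, [.B] => [(.q2, .pop1)]
  | .q2, some .w, [.W] => [(.q2, .pop1)]
  | .q2, some .s, [.Z, .C] => [(.q2, .pop2)]
  | .q2, none, [.Z] => [(.q2, .pop1)]
  | _, _, _ => []

/-- The automaton. -/
def M : IPDA2 St rsbw Gam := ⟨.q0, .Z, delta⟩

/-- The word contributed by a store entry with letter `A` and inner store of length `j`. -/
def fg : Gam → ℕ → List rsbw
  | .B, j => ((sigmaWord^[j]) [BW.B]).map phi'
  | .W, j => ((sigmaWord^[j]) [BW.W]).map phi'
  | .Z, j => List.replicate j rsbw.s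
  | .C, _ => []

/-- The word still to be read according to a store (in state `q2`). -/
def flat (ω : Store Gam) : List rsbw := ω.flatMap (fun p => fg p.1 p.2.length)

/-- Image of the substitution on store letters. -/
def sig : Gam → List Gam
  | .B => [.B, .W]
  | .W => [.B, .W, .W]
  | _ => []

/-- The word still to be read in state `q3` (top letter already substituted once). -/
def flat3 : Store Gam → List rsbw
  | [] => []
  | (A, s) :: rest => (sig A).flatMap (fun x => fg x s.length) ++ flat rest

/-- The bottom-level word. -/
def body (k : ℕ) : List rsbw := ((sigmaWord^[k]) [BW.B]).map phi'

lemma sigma_iter_append (j : ℕ) (u v : List BW) :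
    sigmaWord^[j] (u ++ v) = sigmaWord^[j] u ++ sigmaWord^[j] v := by
  induction j generalizing u v with
  | zero => simp
  | succ j ih =>
      simp only [Function.iterate_succ_apply]
      rw [show sigmaWord (u ++ v) = sigmaWord u ++ sigmaWord v from
        List.flatMap_append .., ih]

lemma fgB_succ (j : ℕ) : fg .B (j + 1) = fg .B j ++ fg .W j := by
  show ((sigmaWord^[j+1]) [BW.B]).map phi' = _
  rw [Function.iterate_succ_apply,
    show sigmaWord [BW.B] = [BW.B] ++ [BW.W] from rfl,
    sigma_iter_append, List.map_append]
  rfl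

lemma fgW_succ (j : ℕ) : fg .W (j + 1) = fg .B j ++ (fg .W j ++ fg .W j) := by
  show ((sigmaWord^[j+1]) [BW.W]).map phi' = _
  rw [Function.iterate_succ_apply,
    show sigmaWord [BW.W] = [BW.B] ++ ([BW.W] ++ [BW.W]) from rfl,
    sigma_iter_append, sigma_iter_append, List.map_append, List.map_append]
  rfl

lemma flat_cons (A : Gam) (s : List Gam) (rest : Store Gam) :
    flat ((A, s) :: rest) = fg A s.length ++ flat rest := by
  simp [flat]

/-- The invariant: what must the remaining input be in a given configuration
for acceptance to be possible. -/
def Pred : Config St rsbw Gam → Prop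
  | (.q0, u, ω) => ω = [(.Z, [])] →
      ∃ k : ℕ, 1 ≤ k ∧
        u = rsbw.r :: (List.replicate k rsbw.s ++ body k ++ List.replicate k rsbw.s)
  | (.q1, u, ω) => ∀ j : ℕ, ω = [(.Z, List.replicate j .C)] →
      ∃ m : ℕ, 1 ≤ j + m ∧
        u = List.replicate m rsbw.s ++ body (j + m) ++ List.replicate (j + m) rsbw.s
  | (.q2, u, ω) => u = flat ω
  | (.q3, u, ω) => u = flat3 ω

lemma sound {c c' : Config St rsbw Gam} (h : M.Step c c') (h' : Pred c') : Pred c := by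
  obtain ⟨q, u, ω⟩ := c
  cases h with
  | eps hmem happ =>
      rename_i q' om' op
      rcases ω with _ | ⟨⟨A, s⟩, rest⟩
      · cases q <;> simp [M, delta, topsym] at hmem
      · cases q <;> cases A <;> rcases s with _ | ⟨c0, t⟩ <;> (try cases c0) <;>
          simp [M, delta, topsym] at hmem
        all_goals obtain ⟨rfl, rfl⟩ := hmem
        all_goals simp [applyOp] at happ
        all_goals subst happ
        -- q1, Z, C :: t : switch to expansion phase
        · intro j hj
          simp only [Pred] at h'
          simp only [List.cons.injEq, Prod.mk.injEq, true_and] at hj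
          obtain ⟨hct, hrest⟩ := hj
          subst hrest
          have hj1 : j = t.length + 1 := by
            have := congrArg List.length hct; simpa using this.symm
          refine ⟨0, by omega, ?_⟩
          rw [h']
          simp [flat, fg, body, hj1]
        -- q2, Z, [] : final pop
        · simp only [Pred] at h' ⊢
          rw [h']; simp [flat, fg]
        -- q2, B, C :: t
        · simp only [Pred] at h' ⊢
          rw [h']
          simp [flat, flat3, sig, fgB_succ]
        -- q2, W, C :: t
        · simp only [Pred] at h' ⊢
          rw [h']
          simp [flat, flat3, sig, fgW_succ]
        -- q3, B, []
        · simp only [Pred] at h' ⊢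
          rw [h']; simp [flat, flat3, sig]
        -- q3, B, C :: t
        · simp only [Pred] at h' ⊢
          rw [h']; simp [flat, flat3, sig]
        -- q3, W, []
        · simp only [Pred] at h' ⊢
          rw [h']; simp [flat, flat3, sig]
        -- q3, W, C :: t
        · simp only [Pred] at h' ⊢
          rw [h']; simp [flat, flat3, sig]
  | read hmem happ =>
      rename_i q' a w om' op
      rcases ω with _ | ⟨⟨A, s⟩, rest⟩
      · cases q <;> cases a <;> simp [M, delta, topsym] at hmem
      · cases q <;> cases a <;> cases A <;> rcases s with _ | ⟨c0, t⟩ <;> (try cases c0) <;>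
          simp [M, delta, topsym] at hmem
        all_goals obtain ⟨rfl, rfl⟩ := hmem
        all_goals simp [applyOp] at happ
        all_goals subst happ
        -- q0, read r
        · intro h
          simp only [Pred] at h'
          simp only [List.cons.injEq, Prod.mk.injEq, true_and, and_true] at h
          subst h
          obtain ⟨m, hm, hw⟩ := h' 0 rfl
          exact ⟨m, by omega, by simp [hw]⟩
        -- q1, read s, counter empty
        · intro j hj
          simp only [Pred] at h'
          simp only [List.cons.injEq, Prod.mk.injEq, true_and] at hj
          obtain ⟨hct, hrest⟩ := hj
          subst hrest
          have hj0 : j = 0 := by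
            have := congrArg List.length hct; simpa using this.symm
          subst hj0
          obtain ⟨m, hm, hw⟩ := h' 1 rfl
          refine ⟨m + 1, by omega, ?_⟩
          have h1 : 1 + m = m + 1 := by omega
          rw [h1] at hw
          simp [List.replicate_succ, hw]
        -- q1, read s, counter nonempty
        · intro j hj
          simp only [Pred] at h'
          simp only [List.cons.injEq, Prod.mk.injEq, true_and] at hj
          obtain ⟨hct, hrest⟩ := hj
          subst hrest
          obtain ⟨m, hm, hw⟩ := h' (j + 1)
            (by rw [List.replicate_succ, ← hct])
          refine ⟨m + 1, by omega, ?_⟩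
          have h1 : j + 1 + m = j + (m + 1) := by omega
          rw [h1] at hw
          simp [List.replicate_succ, hw]
        -- q2, read s
        · simp only [Pred] at h' ⊢
          rw [h']
          simp [flat, fg, List.replicate_succ]
        -- q2, read b
        · simp only [Pred] at h' ⊢
          rw [h']
          simp [flat, fg, phi']
        -- q2, read w
        · simp only [Pred] at h' ⊢
          rw [h']
          simp [flat, fg, phi']

lemma soundSteps {c : Config St rsbw Gam} {q : St}
    (h : M.Steps c (q, [], [])) : Pred c := by
  have h' : Relation.ReflTransGen M.Step c (q, [], []) := h
  clear h
  induction h' using Relation.ReflTransGen.head_induction_on with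
  | refl =>
      cases q with
      | q0 => intro h; simp at h
      | q1 => intro j hj; simp at hj
      | q2 => rfl
      | q3 => rfl
  | head hstep _ ih => exact sound hstep ih

lemma step_q3 (A : Gam) (hA : A = Gam.B ∨ A = Gam.W) (j : ℕ) (u : List rsbw)
    (rest : Store Gam) :
    M.Step (.q3, u, (A, List.replicate j Gam.C) :: rest)
      (.q2, u, (sig A).map (fun x => (x, List.replicate j Gam.C)) ++ rest) := by
  rcases hA with rfl | rfl <;> rcases j with _ | j
  · exact .eps (op := .push1 [.B, .W]) (by simp [M, delta, topsym])
      (by simp [applyOp, sig])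
  · exact .eps (op := .push1 [.B, .W]) (by simp [M, delta, topsym, List.replicate_succ])
      (by simp [applyOp, sig])
  · exact .eps (op := .push1 [.B, .W, .W]) (by simp [M, delta, topsym])
      (by simp [applyOp, sig])
  · exact .eps (op := .push1 [.B, .W, .W]) (by simp [M, delta, topsym, List.replicate_succ])
      (by simp [applyOp, sig])

lemma expand (j : ℕ) : ∀ (A : Gam), A = Gam.B ∨ A = Gam.W →
    ∀ (u : List rsbw) (rest : Store Gam),
    M.Steps (.q2, fg A j ++ u, (A, List.replicate j Gam.C) :: rest) (.q2, u, rest) := by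
  induction j with
  | zero =>
      rintro A (rfl | rfl) u rest
      · refine Relation.ReflTransGen.single ?_
        show M.Step (.q2, rsbw.b :: u, (Gam.B, []) :: rest) (.q2, u, rest)
        exact .read (op := .pop1) (by simp [M, delta, topsym]) (by simp [applyOp])
      · refine Relation.ReflTransGen.single ?_
        show M.Step (.q2, rsbw.w :: u, (Gam.W, []) :: rest) (.q2, u, rest)
        exact .read (op := .pop1) (by simp [M, delta, topsym]) (by simp [applyOp])
  | succ j ih =>
      rintro A (rfl | rfl) u rest
      · have s1 : M.Step
            (.q2, fg Gam.B (j+1) ++ u, (Gam.B, List.replicate (j+1) Gam.C) :: rest)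
            (.q3, fg Gam.B (j+1) ++ u, (Gam.B, List.replicate j Gam.C) :: rest) :=
          .eps (op := .pop2) (by simp [M, delta, topsym, List.replicate_succ])
            (by simp [applyOp, List.replicate_succ])
        have s2 := step_q3 Gam.B (Or.inl rfl) j (fg Gam.B (j+1) ++ u) rest
        refine Relation.ReflTransGen.head s1 (Relation.ReflTransGen.head s2 ?_)
        show M.Steps (.q2, fg Gam.B (j+1) ++ u,
          (Gam.B, List.replicate j Gam.C) :: (Gam.W, List.replicate j Gam.C) :: rest)
          (.q2, u, rest)
        rw [show fg Gam.B (j+1) ++ u = fg Gam.B j ++ (fg Gam.W j ++ u) by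
          rw [fgB_succ, List.append_assoc]]
        exact Relation.ReflTransGen.trans
          (ih Gam.B (Or.inl rfl) (fg Gam.W j ++ u) ((Gam.W, List.replicate j Gam.C) :: rest))
          (ih Gam.W (Or.inr rfl) u rest)
      · have s1 : M.Step
            (.q2, fg Gam.W (j+1) ++ u, (Gam.W, List.replicate (j+1) Gam.C) :: rest)
            (.q3, fg Gam.W (j+1) ++ u, (Gam.W, List.replicate j Gam.C) :: rest) :=
          .eps (op := .pop2) (by simp [M, delta, topsym, List.replicate_succ])
            (by simp [applyOp, List.replicate_succ])
        have s2 := step_q3 Gam.W (Or.inr rfl) j (fg Gam.W (j+1) ++ u) rest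
        refine Relation.ReflTransGen.head s1 (Relation.ReflTransGen.head s2 ?_)
        show M.Steps (.q2, fg Gam.W (j+1) ++ u,
          (Gam.B, List.replicate j Gam.C) :: (Gam.W, List.replicate j Gam.C) ::
            (Gam.W, List.replicate j Gam.C) :: rest)
          (.q2, u, rest)
        rw [show fg Gam.W (j+1) ++ u = fg Gam.B j ++ (fg Gam.W j ++ (fg Gam.W j ++ u)) by
          rw [fgW_succ]; simp [List.append_assoc]]
        exact Relation.ReflTransGen.trans
          (ih Gam.B (Or.inl rfl) (fg Gam.W j ++ (fg Gam.W j ++ u))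
            ((Gam.W, List.replicate j Gam.C) :: (Gam.W, List.replicate j Gam.C) :: rest))
          (Relation.ReflTransGen.trans
            (ih Gam.W (Or.inr rfl) (fg Gam.W j ++ u) ((Gam.W, List.replicate j Gam.C) :: rest))
            (ih Gam.W (Or.inr rfl) u rest))

lemma count (m : ℕ) : ∀ (j : ℕ) (u : List rsbw),
    M.Steps (.q1, List.replicate m rsbw.s ++ u, [(Gam.Z, List.replicate j Gam.C)])
      (.q1, u, [(Gam.Z, List.replicate (j + m) Gam.C)]) := by
  induction m with
  | zero => intro j u; simp; exact Relation.ReflTransGen.refl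
  | succ m ih =>
      intro j u
      have s1 : M.Step
          (.q1, List.replicate (m+1) rsbw.s ++ u, [(Gam.Z, List.replicate j Gam.C)])
          (.q1, List.replicate m rsbw.s ++ u, [(Gam.Z, List.replicate (j+1) Gam.C)]) := by
        rcases j with _ | j
        · exact .read (op := .push2 [.C]) (by simp [M, delta, topsym])
            (by simp [applyOp, List.replicate_succ])
        · exact .read (op := .push2 [.C]) (by simp [M, delta, topsym, List.replicate_succ])
            (by simp [applyOp, List.replicate_succ])
      have h2 := ih (j+1) u
      rw [show j + 1 + m = j + (m + 1) by omega] at h2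
      exact Relation.ReflTransGen.head s1 h2

lemma tailSteps (j : ℕ) : ∀ (u : List rsbw) (rest : Store Gam),
    M.Steps (.q2, List.replicate j rsbw.s ++ u, (Gam.Z, List.replicate j Gam.C) :: rest)
      (.q2, u, (Gam.Z, []) :: rest) := by
  induction j with
  | zero => intro u rest; simp; exact Relation.ReflTransGen.refl
  | succ j ih =>
      intro u rest
      exact Relation.ReflTransGen.head
        (IPDA2.Step.read (op := .pop2) (by simp [M, delta, topsym, List.replicate_succ])
          (by simp [applyOp, List.replicate_succ])) (ih u rest)

lemma forward (k : ℕ) (hk : 1 ≤ k) :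
    M.Accepts (rsbw.r ::
      (List.replicate k rsbw.s ++ body k ++ List.replicate k rsbw.s)) := by
  obtain ⟨k', rfl⟩ : ∃ k', k = k' + 1 := ⟨k - 1, by omega⟩
  set k := k' + 1 with hkdef
  refine ⟨.q2, ?_⟩
  have s0 : M.Step
      (.q0, rsbw.r :: (List.replicate k rsbw.s ++ body k ++ List.replicate k rsbw.s),
        [(Gam.Z, [])])
      (.q1, List.replicate k rsbw.s ++ body k ++ List.replicate k rsbw.s,
        [(Gam.Z, [])]) :=
    .read (op := .push2 []) (by simp [M, delta, topsym]) (by simp [applyOp])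
  refine Relation.ReflTransGen.head s0 ?_
  rw [show List.replicate k rsbw.s ++ body k ++ List.replicate k rsbw.s
      = List.replicate k rsbw.s ++ (body k ++ (List.replicate k rsbw.s ++ [])) by simp]
  have c1 := count k 0 (body k ++ (List.replicate k rsbw.s ++ []))
  rw [Nat.zero_add] at c1
  have c1' : M.Steps
      (.q1, List.replicate k rsbw.s ++ (body k ++ (List.replicate k rsbw.s ++ [])),
        [(Gam.Z, [])])
      (.q1, body k ++ (List.replicate k rsbw.s ++ []),
        [(Gam.Z, List.replicate k Gam.C)]) := c1
  refine Relation.ReflTransGen.trans c1' ?_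
  have s2 : M.Step
      (.q1, body k ++ (List.replicate k rsbw.s ++ []), [(Gam.Z, List.replicate k Gam.C)])
      (.q2, body k ++ (List.replicate k rsbw.s ++ []),
        [(Gam.B, List.replicate k Gam.C), (Gam.Z, List.replicate k Gam.C)]) :=
    .eps (op := .push1 [.B, .Z]) (by simp [M, delta, topsym, hkdef, List.replicate_succ])
      (by simp [applyOp])
  refine Relation.ReflTransGen.head s2 ?_
  have e1 := expand k Gam.B (Or.inl rfl) (List.replicate k rsbw.s ++ [])
    [(Gam.Z, List.replicate k Gam.C)]
  refine Relation.ReflTransGen.trans e1 ?_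
  refine Relation.ReflTransGen.trans (tailSteps k [] []) ?_
  refine Relation.ReflTransGen.single ?_
  exact .eps (op := .pop1) (by simp [M, delta, topsym]) (by simp [applyOp])

end BlackSector

/-- There exists a 2-iterated pushdown automaton with input alphabet `{r, s, b, w}` that
accepts a word `u` if and only if `u = r · s^k · φ(σ^k(B)) · s^k` for some integer
`k ≥ 1` — exactly the contour words of the truncated black sectors of the pentagrid and
of the heptagrid (root read as `r`, the nodes of the leftmost and rightmost branches
below the root read as `s`, the bottom level read as the level word of the Fibonacci
tree rooted at a black node). -/
theorem exists_ipda2_black_sector_contours :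
    ∃ (Q Γ : Type) (_ : Fintype Q) (_ : Fintype Γ) (M : IPDA2 Q rsbw Γ),
      ∀ u : List rsbw,
        M.Accepts u ↔
          ∃ k : ℕ, 1 ≤ k ∧
            u = rsbw.r :: (List.replicate k rsbw.s ++
                  (sigmaWord^[k] [BW.B]).map phi' ++ List.replicate k rsbw.s) := by
  refine ⟨BlackSector.St, BlackSector.Gam, inferInstance, inferInstance,
    BlackSector.M, fun u => ?_⟩
  constructor
  · rintro ⟨q, hq⟩
    obtain ⟨k, hk, hu⟩ := BlackSector.soundSteps hq rfl
    exact ⟨k, hk, hu⟩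
  · rintro ⟨k, hk, rfl⟩
    exact BlackSector.forward k hk
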